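/- Let f ⊆ f' and e be convex sets in ℝ^d with tangent spaces F ⊆ F' and E respectively. Assume (i) relint(f) ∩ relint(e) ≠ ∅, (ii) dim(F') = dim(F) + 1, and (iii) dim(E ∩ F') = dim(E ∩ F) + 1. Then dim(e ∩ f') = dim(e ∩ f) + 1. -/

import Mathlib

open Module

variable {d : ℕ}

private lemma span_sub_eq {s : Set (EuclideanSpace ℝ (Fin d))}
    {x : EuclideanSpace ℝ (Fin d)} (hx : x ∈ s) :
    Submodule.span ℝ ((· - x) '' s) = vectorSpan ℝ s := by
  rw [vectorSpan_eq_span_vsub_set_right ℝ hx]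
  simp only [vsub_eq_sub]

private lemma move {s : Set (EuclideanSpace ℝ (Fin d))}
    {z u : EuclideanSpace ℝ (Fin d)} (hz : z ∈ intrinsicInterior ℝ s)
    (hu : u ∈ vectorSpan ℝ s) : ∃ ε : ℝ, 0 < ε ∧ z + ε • u ∈ s := by
  obtain ⟨w, hw, rfl⟩ := hz
  have hmem : ∀ t : ℝ, (w : EuclideanSpace ℝ (Fin d)) + t • u ∈ affineSpan ℝ s := by
    intro t
    have h1 : t • u ∈ (affineSpan ℝ s).direction := by
      rw [direction_affineSpan]; exact Submodule.smul_mem _ _ hu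
    have := AffineSubspace.vadd_mem_of_mem_direction h1 w.2
    simpa [add_comm] using this
  set γ : ℝ → affineSpan ℝ s := fun t => ⟨(w : EuclideanSpace ℝ (Fin d)) + t • u, hmem t⟩ with hγ
  have hcont : Continuous γ := by
    apply Continuous.subtype_mk
    exact continuous_const.add (continuous_id.smul continuous_const)
  have hopen : IsOpen (γ ⁻¹' interior ((↑) ⁻¹' s)) := isOpen_interior.preimage hcont
  have h0 : (0:ℝ) ∈ γ ⁻¹' interior ((↑) ⁻¹' s) := by
    have : γ 0 = w := by ext; simp [hγ]
    simpa [Set.mem_preimage, this] using hw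
  obtain ⟨ε, hε, hball⟩ := Metric.isOpen_iff.1 hopen 0 h0
  refine ⟨ε/2, by positivity, ?_⟩
  have hb : γ (ε/2) ∈ interior ((↑) ⁻¹' s) := by
    apply hball
    simp only [Metric.mem_ball, Real.dist_eq, sub_zero]
    rw [abs_of_pos (by positivity)]; linarith
  have hb2 : γ (ε/2) ∈ ((↑) ⁻¹' s : Set (affineSpan ℝ s)) := interior_subset hb
  exact hb2

private lemma shrink {s : Set (EuclideanSpace ℝ (Fin d))} (hs : Convex ℝ s)
    {z w : EuclideanSpace ℝ (Fin d)} (hz : z ∈ s) (hw : z + w ∈ s)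
    {t : ℝ} (h0 : 0 ≤ t) (h1 : t ≤ 1) : z + t • w ∈ s := by
  have h := hs hz hw (by linarith : (0:ℝ) ≤ 1 - t) h0 (by ring)
  convert h using 1
  module

private lemma shrink' {s : Set (EuclideanSpace ℝ (Fin d))} (hs : Convex ℝ s)
    {z u : EuclideanSpace ℝ (Fin d)} (hz : z ∈ s) {ε : ℝ} (hε : 0 < ε)
    (hw : z + ε • u ∈ s) {t : ℝ} (h0 : 0 ≤ t) (h1 : t ≤ ε) : z + t • u ∈ s := by
  have h := shrink hs hz hw (t := t/ε) (by positivity) (by rw [div_le_one hε]; exact h1)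
  rwa [smul_smul, div_mul_cancel₀ _ hε.ne'] at h

private lemma finrank_sup_span_singleton {W : Submodule ℝ (EuclideanSpace ℝ (Fin d))}
    {v : EuclideanSpace ℝ (Fin d)} (hv : v ∉ W) :
    finrank ℝ ↥(W ⊔ Submodule.span ℝ {v}) = finrank ℝ ↥W + 1 := by
  have hv0 : v ≠ 0 := fun h => hv (h ▸ W.zero_mem)
  have hdisj : W ⊓ Submodule.span ℝ {v} = ⊥ := by
    rw [eq_bot_iff]
    rintro m ⟨hmW, hmv⟩
    obtain ⟨c, rfl⟩ := Submodule.mem_span_singleton.1 hmv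
    rcases eq_or_ne c 0 with rfl | hc
    · simp
    · exact absurd (by simpa [smul_smul, inv_mul_cancel₀ hc] using W.smul_mem c⁻¹ hmW) hv
  have h := Submodule.finrank_sup_add_finrank_inf_eq W (Submodule.span ℝ {v})
  rw [hdisj, finrank_bot, finrank_span_singleton hv0] at h
  omega


/-- If `f ⊆ f'` and `e` are convex, `relint f ∩ relint e ≠ ∅`,
`dim F' = dim F + 1` and `dim (E ⊓ F') = dim (E ⊓ F) + 1`, then
`dim (e ∩ f') = dim (e ∩ f) + 1` (dimensions of convex sets = dim of their affine spans). -/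
theorem dim_inter_succ {d : ℕ}
    (e f f' : Set (EuclideanSpace ℝ (Fin d)))
    (he : Convex ℝ e) (hf : Convex ℝ f) (hf' : Convex ℝ f') (hff' : f ⊆ f')
    (x y y' : EuclideanSpace ℝ (Fin d)) (hx : x ∈ e) (hy : y ∈ f) (hy' : y' ∈ f')
    (E F F' : Submodule ℝ (EuclideanSpace ℝ (Fin d)))
    (hE : E = Submodule.span ℝ ((· - x) '' e))
    (hF : F = Submodule.span ℝ ((· - y) '' f))
    (hF' : F' = Submodule.span ℝ ((· - y') '' f'))
    (hri : (intrinsicInterior ℝ f ∩ intrinsicInterior ℝ e).Nonempty)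
    (hdimF : Module.finrank ℝ F' = Module.finrank ℝ F + 1)
    (hdimEF : Module.finrank ℝ ↥(E ⊓ F') = Module.finrank ℝ ↥(E ⊓ F) + 1) :
    Module.finrank ℝ (vectorSpan ℝ (e ∩ f')) = Module.finrank ℝ (vectorSpan ℝ (e ∩ f)) + 1 := by
  obtain ⟨z, hzf, hze⟩ := hri
  have hzf0 : z ∈ f := intrinsicInterior_subset hzf
  have hze0 : z ∈ e := intrinsicInterior_subset hze
  have hzf'0 : z ∈ f' := hff' hzf0
  have hEe : E = vectorSpan ℝ e := by rw [hE, span_sub_eq hx]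
  have hFf : F = vectorSpan ℝ f := by rw [hF, span_sub_eq hy]
  have hF'f : F' = vectorSpan ℝ f' := by rw [hF', span_sub_eq hy']
  have hFF' : F ≤ F' := by
    rw [hFf, hF'f]; exact vectorSpan_mono ℝ hff'
  -- vectorSpan (e ∩ f) = E ⊓ F
  have hVle : vectorSpan ℝ (e ∩ f) ≤ E ⊓ F :=
    le_inf (hEe ▸ vectorSpan_mono ℝ Set.inter_subset_left)
      (hFf ▸ vectorSpan_mono ℝ Set.inter_subset_right)
  have hVge : E ⊓ F ≤ vectorSpan ℝ (e ∩ f) := by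
    rintro u ⟨huE, huF⟩
    obtain ⟨ε₁, hε₁, h₁⟩ := move hze (hEe ▸ huE)
    obtain ⟨ε₂, hε₂, h₂⟩ := move hzf (hFf ▸ huF)
    set t := min ε₁ ε₂ with ht
    have ht0 : 0 < t := lt_min hε₁ hε₂
    have hte : z + t • u ∈ e := shrink' he hze0 hε₁ h₁ ht0.le (min_le_left _ _)
    have htf : z + t • u ∈ f := shrink' hf hzf0 hε₂ h₂ ht0.le (min_le_right _ _)
    have hd : t • u ∈ vectorSpan ℝ (e ∩ f) := by
      have := vsub_mem_vectorSpan ℝ (Set.mem_inter hte htf) (Set.mem_inter hze0 hzf0)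
      simpa using this
    have := Submodule.smul_mem _ t⁻¹ hd
    rwa [smul_smul, inv_mul_cancel₀ ht0.ne', one_smul] at this
  have hVeq : vectorSpan ℝ (e ∩ f) = E ⊓ F := le_antisymm hVle hVge
  -- pick v ∈ E ⊓ F' outside E ⊓ F
  have hEFle : E ⊓ F ≤ E ⊓ F' := inf_le_inf_left E hFF'
  have hne : E ⊓ F ≠ E ⊓ F' := fun h => by rw [h] at hdimEF; omega
  obtain ⟨v, hvEF', hvEF⟩ := SetLike.exists_of_lt (lt_of_le_of_ne hEFle hne)
  have hvE : v ∈ E := hvEF'.1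
  have hvF' : v ∈ F' := hvEF'.2
  have hvF : v ∉ F := fun h => hvEF ⟨hvE, h⟩
  -- F' = F ⊔ span {v}
  have hF'eq : F ⊔ Submodule.span ℝ {v} = F' := by
    apply Submodule.eq_of_le_of_finrank_eq
      (sup_le hFF' ((Submodule.span_singleton_le_iff_mem v F').2 hvF'))
    rw [finrank_sup_span_singleton hvF, hdimF]
  -- find p ∈ f' with p - z ∉ F
  have hex : ∃ p ∈ f', p - z ∉ F := by
    by_contra h
    push_neg at h
    have hle : F' ≤ F := by
      rw [hF']
      apply Submodule.span_le.2
      rintro _ ⟨p, hp, rfl⟩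
      have h1 := h p hp
      have h2 := h y' hy'
      simpa using F.sub_mem h1 h2
    exact hvF (hle hvF')
  obtain ⟨p, hp, hpF⟩ := hex
  have hpz : p - z ∈ F' := by
    rw [hF'f]
    exact vsub_mem_vectorSpan ℝ hp hzf'0
  rw [← hF'eq] at hpz
  obtain ⟨w, hwF, m, hmv, hwm⟩ := Submodule.mem_sup.1 hpz
  obtain ⟨β, rfl⟩ := Submodule.mem_span_singleton.1 hmv
  have hβ : β ≠ 0 := by
    rintro rfl
    apply hpF
    rw [← hwm]; simpa using hwF
  -- move from z towards -w inside f
  obtain ⟨ε₃, hε₃, h₃⟩ := move hzf (hFf ▸ F.neg_mem hwF)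
  set lam : ℝ := ε₃ / (1 + ε₃) with hlam
  have hlam0 : 0 < lam := by positivity
  have hlam1 : lam < 1 := by
    rw [hlam, div_lt_one (by positivity)]; linarith
  have hzero : lam - (1 - lam) * ε₃ = 0 := by
    rw [hlam]; field_simp; ring
  have hpdef : p = z + (w + β • v) := by rw [hwm]; abel
  have hb : z + (-ε₃) • w ∈ f' := by
    have := hff' h₃
    simpa [neg_smul, smul_neg] using this
  have hcombo : z + (lam * β) • v ∈ f' := by
    have hcv := hf' hp hb hlam0.le (by linarith : (0:ℝ) ≤ 1 - lam) (by ring)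
    have hkey : lam • p + (1 - lam) • (z + (-ε₃) • w) =
        z + (lam - (1 - lam) * ε₃) • w + (lam * β) • v := by
      rw [hpdef]; module
    rw [hkey, hzero] at hcv
    simpa using hcv
  obtain ⟨μ, hμ0, hcombo⟩ : ∃ μ : ℝ, μ ≠ 0 ∧ z + μ • v ∈ f' :=
    ⟨lam * β, mul_ne_zero hlam0.ne' hβ, hcombo⟩
  -- move inside e along μ • v
  obtain ⟨ε₄, hε₄, h₄⟩ := move hze (hEe ▸ E.smul_mem μ hvE)
  set t : ℝ := min ε₄ 1 with htdef
  have ht0 : 0 < t := lt_min hε₄ one_pos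
  have hqe : z + t • (μ • v) ∈ e := shrink' he hze0 hε₄ h₄ ht0.le (min_le_left _ _)
  have hqf' : z + t • (μ • v) ∈ f' := by
    have h1 : z + (1:ℝ) • (μ • v) ∈ f' := by simpa using hcombo
    exact shrink' hf' hzf'0 one_pos h1 ht0.le (min_le_right _ _)
  -- v ∈ vectorSpan (e ∩ f')
  have hvmem : v ∈ vectorSpan ℝ (e ∩ f') := by
    have hd : t • (μ • v) ∈ vectorSpan ℝ (e ∩ f') := by
      have := vsub_mem_vectorSpan ℝ (Set.mem_inter hqe hqf') (Set.mem_inter hze0 hzf'0)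
      simpa using this
    have hd2 : (t * μ) • v ∈ vectorSpan ℝ (e ∩ f') := by rwa [← smul_smul]
    have := Submodule.smul_mem _ (t * μ)⁻¹ hd2
    rwa [smul_smul, inv_mul_cancel₀ (mul_ne_zero ht0.ne' hμ0), one_smul] at this
  -- dimension count
  have hle1 : vectorSpan ℝ (e ∩ f') ≤ E ⊓ F' :=
    le_inf (hEe ▸ vectorSpan_mono ℝ Set.inter_subset_left)
      (hF'f ▸ vectorSpan_mono ℝ Set.inter_subset_right)
  have hge1 : (E ⊓ F) ⊔ Submodule.span ℝ {v} ≤ vectorSpan ℝ (e ∩ f') := by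
    apply sup_le
    · rw [← hVeq]
      exact vectorSpan_mono ℝ (Set.inter_subset_inter_right _ hff')
    · exact (Submodule.span_singleton_le_iff_mem v _).2 hvmem
  have hrk : Module.finrank ℝ ↥((E ⊓ F) ⊔ Submodule.span ℝ {v})
      = Module.finrank ℝ ↥(E ⊓ F) + 1 := finrank_sup_span_singleton hvEF
  have h1 := Submodule.finrank_mono hle1
  have h2 := Submodule.finrank_mono hge1
  rw [hVeq]
  omega
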